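/- Nash implementation of the centralized optimum (Theorem 1(b) / Claim 4): if m* is a Nash equilibrium of the game induced by the mechanism and the users' payoffs, then the equilibrium allocation is an optimal solution of the centralized problem (P_C): â_i(m*) ∈ A_i for all i ∈ N, Σ_{i∈N} t̂_i(m*) = 0, and for every feasible action profile a, Σ_{i∈N} u_i((a_j)_{j∈R_i}) ≤ Σ_{i∈N} u_i((â_j(m*))_{j∈R_i}). -/

import Mathlib

open Finset

/-- The set `C_j` of users affected by `j`: those `k` with `j ∈ R k`. -/
def affected {N : Type*} [Fintype N] [DecidableEq N] (R : N → Finset N) (j : N) : Finset N :=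
  Finset.univ.filter (fun k => j ∈ R k)

/-- The action `â_j(m)` assigned to user `j` by the mechanism. -/
noncomputable def ahat {N : Type*} [Fintype N] [DecidableEq N] (R : N → Finset N)
    (a : N → N → ℝ) (j : N) : ℝ :=
  (∑ k ∈ affected R j, a k j) / ((affected R j).card : ℝ)

/-- The personalized price `l_{ij}(m)` of user `i` for the action of `j`. -/
def price {N : Type*} (σ : N → N → N) (π : N → N → ℝ) (i j : N) : ℝ :=
  π (σ j i) j - π (σ j (σ j i)) j

/-- The tax `t̂_i(m)` of user `i`. -/
noncomputable def tax {N : Type*} [Fintype N] [DecidableEq N] (R : N → Finset N)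
    (σ : N → N → N) (a π : N → N → ℝ) (i : N) : ℝ :=
  ∑ j ∈ R i,
    (price σ π i j * ahat R a j
      + π i j * (a i j - a (σ j i) j) ^ 2
      - π (σ j i) j * (a (σ j i) j - a (σ j (σ j i)) j) ^ 2)

open Classical in
/-- User `i`'s payoff (valued in `EReal`) at the message profile `(a, π)`. -/
noncomputable def payoff {N : Type*} [Fintype N] [DecidableEq N] (R : N → Finset N)
    (σ : N → N → N) (A : N → Set ℝ) (u : ∀ i : N, (↥(R i) → ℝ) → ℝ)
    (a π : N → N → ℝ) (i : N) : EReal :=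
  if ahat R a i ∈ A i then
    (((- tax R σ a π i + u i fun j => ahat R a j.1) : ℝ) : EReal)
  else ⊥

/-- `(a, π)` is a Nash equilibrium of the game induced by the mechanism and the payoffs. -/
def IsNE {N : Type*} [Fintype N] [DecidableEq N] (R : N → Finset N)
    (σ : N → N → N) (A : N → Set ℝ) (u : ∀ i : N, (↥(R i) → ℝ) → ℝ)
    (a π : N → N → ℝ) : Prop :=
  (∀ i, ∀ j ∈ R i, 0 ≤ π i j) ∧
  ∀ (i : N) (a' π' : N → ℝ), (∀ j ∈ R i, 0 ≤ π' j) →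
    payoff R σ A u (Function.update a i a') (Function.update π i π') i ≤
      payoff R σ A u a π i

/-- Nash implementation of the centralized optimum (Theorem 1(b) / Claim 4). -/
theorem NE_implements_optimum
    {N : Type*} [Fintype N] [DecidableEq N]
    (R : N → Finset N) (σ : N → N → N)
    (hR : ∀ i, i ∈ R i)
    (hC3 : ∀ j, 3 ≤ (affected R j).card)
    (hσ : ∀ j, Set.BijOn (σ j) ↑(affected R j) ↑(affected R j))
    (hcyc : ∀ j, ∀ x ∈ affected R j, ∀ y ∈ affected R j, ∃ n : ℕ, (σ j)^[n] x = y)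
    (A : N → Set ℝ)
    (hA0 : ∀ i, (0 : ℝ) ∈ A i) (hAconv : ∀ i, Convex ℝ (A i)) (hAcomp : ∀ i, IsCompact (A i))
    (u : ∀ i : N, (↥(R i) → ℝ) → ℝ)
    (hu : ∀ i, ConcaveOn ℝ Set.univ (u i))
    (a π : N → N → ℝ)
    (hNE : IsNE R σ A u a π) :
    (∀ i, ahat R a i ∈ A i) ∧
    (∑ i, tax R σ a π i = 0) ∧
    ∀ b : N → ℝ, (∀ i, b i ∈ A i) →
      ∑ i, u i (fun j => b j.1) ≤ ∑ i, u i (fun j => ahat R a j.1) := by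

  classical
  obtain ⟨hπ0, hnash⟩ := hNE
  -- basic membership facts
  have hmemC : ∀ i j, j ∈ R i → i ∈ affected R j := by
    intro i j h; simp [affected, h]
  have hself : ∀ j, j ∈ affected R j := fun j => hmemC j j (hR j)
  have hncard : ∀ j, ((affected R j).card : ℝ) ≠ 0 := by
    intro j
    have h := hC3 j
    have h0 : (affected R j).card ≠ 0 := by omega
    exact Nat.cast_ne_zero.mpr h0
  have hσmem : ∀ j i, i ∈ affected R j → σ j i ∈ affected R j := by
    intro j i h
    exact Finset.mem_coe.mp ((hσ j).mapsTo (Finset.mem_coe.mpr h))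
  -- σ j has no fixed points or 2-cycles on affected R j
  have horb : ∀ j i, i ∈ affected R j → σ j (σ j i) = i →
      ∀ n, (σ j)^[n] i = i ∨ (σ j)^[n] i = σ j i := by
    intro j i hi h2 n
    induction n with
    | zero => exact Or.inl rfl
    | succ n ih =>
      rw [Function.iterate_succ_apply']
      rcases ih with h | h
      · exact Or.inr (by rw [h])
      · exact Or.inl (by rw [h, h2])
  have hσne2 : ∀ j i, i ∈ affected R j → σ j (σ j i) ≠ i := by
    intro j i hi h2
    have hsub : affected R j ⊆ {i, σ j i} := by
      intro y hy
      obtain ⟨n, hn⟩ := hcyc j i hi y hy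
      rcases horb j i hi h2 n with h | h <;> simp [← hn, h]
    have hle := Finset.card_le_card hsub
    have h2' := Finset.card_insert_le i ({σ j i} : Finset N)
    have h3 := hC3 j
    simp only [Finset.card_singleton] at h2'
    omega
  have hσne1 : ∀ j i, i ∈ affected R j → σ j i ≠ i := by
    intro j i hi h1
    exact hσne2 j i hi (by rw [h1, h1])
  -- reindexing sums along σ j
  have hreindex : ∀ j (g : N → ℝ),
      ∑ k ∈ affected R j, g (σ j k) = ∑ k ∈ affected R j, g k := by
    intro j g
    refine Finset.sum_bij (fun x _ => σ j x) (fun x hx => hσmem j x hx)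
      (fun x hx y hy h => (hσ j).injOn (Finset.mem_coe.mpr hx) (Finset.mem_coe.mpr hy) h)
      (fun y hy => ?_) (fun x hx => rfl)
    obtain ⟨x, hx, hxy⟩ := (hσ j).surjOn (Finset.mem_coe.mpr hy)
    exact ⟨x, Finset.mem_coe.mp hx, hxy⟩
  have hpricesum : ∀ j, ∑ k ∈ affected R j, price σ π k j = 0 := by
    intro j
    simp only [price]
    rw [Finset.sum_sub_distrib]
    have h2 := hreindex j (fun k => π (σ j k) j)
    rw [h2, sub_self]
  have hpen : ∀ j, ∑ k ∈ affected R j, π (σ j k) j * (a (σ j k) j - a (σ j (σ j k)) j) ^ 2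
      = ∑ k ∈ affected R j, π k j * (a k j - a (σ j k) j) ^ 2 :=
    fun j => hreindex j (fun k => π k j * (a k j - a (σ j k) j) ^ 2)
  -- swapping double sums between R and affected
  have hswap : ∀ F : N → N → ℝ,
      ∑ i, ∑ j ∈ R i, F i j = ∑ j, ∑ i ∈ affected R j, F i j := by
    intro F
    have h1 : ∀ i : N, ∑ j ∈ R i, F i j = ∑ j, if j ∈ R i then F i j else 0 := by
      intro i
      rw [Finset.sum_ite_mem, Finset.univ_inter]
    simp_rw [h1]
    rw [Finset.sum_comm]
    refine Finset.sum_congr rfl fun j _ => ?_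
    rw [affected, Finset.sum_filter]
  -- budget balance
  have hbal : ∑ i, tax R σ a π i = 0 := by
    unfold tax
    rw [hswap (fun i j => price σ π i j * ahat R a j
      + π i j * (a i j - a (σ j i) j) ^ 2
      - π (σ j i) j * (a (σ j i) j - a (σ j (σ j i)) j) ^ 2)]
    refine Finset.sum_eq_zero fun j _ => ?_
    have hexp : ∑ k ∈ affected R j, (price σ π k j * ahat R a j
        + π k j * (a k j - a (σ j k) j) ^ 2
        - π (σ j k) j * (a (σ j k) j - a (σ j (σ j k)) j) ^ 2)
        = (∑ k ∈ affected R j, price σ π k j) * ahat R a j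
          + ∑ k ∈ affected R j, π k j * (a k j - a (σ j k) j) ^ 2
          - ∑ k ∈ affected R j, π (σ j k) j * (a (σ j k) j - a (σ j (σ j k)) j) ^ 2 := by
      rw [Finset.sum_sub_distrib, Finset.sum_add_distrib, Finset.sum_mul]
    rw [hexp, hpricesum, hpen]
    ring
  -- ahat after a unilateral deviation
  have hupd : ∀ (i : N) (a' : N → ℝ) (j : N), j ∈ R i →
      ahat R (Function.update a i a') j
        = (a' j + ∑ k ∈ (affected R j).erase i, a k j) / ((affected R j).card : ℝ) := by
    intro i a' j hj
    unfold ahat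
    congr 1
    rw [← Finset.add_sum_erase _ _ (hmemC i j hj)]
    congr 1
    · simp
    · refine Finset.sum_congr rfl fun k hk => ?_
      rw [Function.update_of_ne (Finset.ne_of_mem_erase hk)]
  -- payoff of the key deviation
  have hdevpay : ∀ (i : N) (x : N → ℝ),
      payoff R σ A u
        (Function.update a i
          (fun j => ((affected R j).card : ℝ) * x j - ∑ k ∈ (affected R j).erase i, a k j))
        (Function.update π i (fun _ => 0)) i
      = if x i ∈ A i then
          (((- (∑ j ∈ R i, (price σ π i j * x j
              - π (σ j i) j * (a (σ j i) j - a (σ j (σ j i)) j) ^ 2))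
            + u i fun j => x j.1) : ℝ) : EReal)
        else ⊥ := by
    intro i x
    set a' : N → ℝ := fun j =>
      ((affected R j).card : ℝ) * x j - ∑ k ∈ (affected R j).erase i, a k j with ha'
    have hax : ∀ j, j ∈ R i → ahat R (Function.update a i a') j = x j := by
      intro j hj
      rw [hupd i a' j hj, ha']
      rw [div_eq_iff (hncard j)]
      ring
    have htax : tax R σ (Function.update a i a') (Function.update π i (fun _ => 0)) i
        = ∑ j ∈ R i, (price σ π i j * x j
            - π (σ j i) j * (a (σ j i) j - a (σ j (σ j i)) j) ^ 2) := by
      unfold tax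
      refine Finset.sum_congr rfl fun j hj => ?_
      have hiC : i ∈ affected R j := hmemC i j hj
      have hne1 : σ j i ≠ i := hσne1 j i hiC
      have hne2 : σ j (σ j i) ≠ i := hσne2 j i hiC
      have hprice : price σ (Function.update π i (fun _ => 0)) i j = price σ π i j := by
        unfold price
        rw [Function.update_of_ne hne1, Function.update_of_ne hne2]
      rw [hprice, hax j hj, Function.update_self, Function.update_of_ne hne1,
        Function.update_of_ne hne2, Function.update_of_ne hne1]
      ring
    unfold payoff
    have hfun : (fun j : ↥(R i) => ahat R (Function.update a i a') j.1)
        = fun j : ↥(R i) => x j.1 := funext fun j => hax j.1 j.2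
    rw [hax i (hR i), htax, hfun]
  -- feasibility of the equilibrium actions
  have hfeas : ∀ i, ahat R a i ∈ A i := by
    intro i
    by_contra hnot
    have h1 := hdevpay i (fun _ => 0)
    have h2 := hnash i
      (fun j => ((affected R j).card : ℝ) * (fun _ => (0:ℝ)) j
        - ∑ k ∈ (affected R j).erase i, a k j)
      (fun _ => 0) (fun j _ => le_rfl)
    rw [h1, if_pos (hA0 i)] at h2
    unfold payoff at h2
    rw [if_neg hnot] at h2
    exact (not_le.mpr (EReal.bot_lt_coe _)) h2
  -- key inequality from the NE condition
  have hkey : ∀ (i : N) (x : N → ℝ), x i ∈ A i →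
      u i (fun j => x j.1)
        ≤ (∑ j ∈ R i, price σ π i j * (x j - ahat R a j)) + u i (fun j => ahat R a j.1) := by
    intro i x hx
    have h1 := hdevpay i x
    have h2 := hnash i
      (fun j => ((affected R j).card : ℝ) * x j - ∑ k ∈ (affected R j).erase i, a k j)
      (fun _ => 0) (fun j _ => le_rfl)
    rw [h1, if_pos hx] at h2
    unfold payoff at h2
    rw [if_pos (hfeas i)] at h2
    rw [EReal.coe_le_coe_iff] at h2
    unfold tax at h2
    have hexp1 : ∑ j ∈ R i, (price σ π i j * x j
        - π (σ j i) j * (a (σ j i) j - a (σ j (σ j i)) j) ^ 2)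
        = ∑ j ∈ R i, price σ π i j * x j
          - ∑ j ∈ R i, π (σ j i) j * (a (σ j i) j - a (σ j (σ j i)) j) ^ 2 :=
      Finset.sum_sub_distrib _ _
    have hexp2 : ∑ j ∈ R i, (price σ π i j * ahat R a j
        + π i j * (a i j - a (σ j i) j) ^ 2
        - π (σ j i) j * (a (σ j i) j - a (σ j (σ j i)) j) ^ 2)
        = ∑ j ∈ R i, price σ π i j * ahat R a j
          + ∑ j ∈ R i, π i j * (a i j - a (σ j i) j) ^ 2
          - ∑ j ∈ R i, π (σ j i) j * (a (σ j i) j - a (σ j (σ j i)) j) ^ 2 := by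
      rw [Finset.sum_sub_distrib, Finset.sum_add_distrib]
    have hP : 0 ≤ ∑ j ∈ R i, π i j * (a i j - a (σ j i) j) ^ 2 :=
      Finset.sum_nonneg fun j hj => mul_nonneg (hπ0 i j hj) (sq_nonneg _)
    have hexp3 : ∑ j ∈ R i, price σ π i j * (x j - ahat R a j)
        = ∑ j ∈ R i, price σ π i j * x j - ∑ j ∈ R i, price σ π i j * ahat R a j := by
      rw [← Finset.sum_sub_distrib]
      exact Finset.sum_congr rfl fun j _ => by ring
    rw [hexp1, hexp2] at h2
    rw [hexp3]
    linarith
  refine ⟨hfeas, hbal, fun b hb => ?_⟩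
  have hsum := Finset.sum_le_sum (fun i (_ : i ∈ Finset.univ) => hkey i b (hb i))
  rw [Finset.sum_add_distrib] at hsum
  have hz : ∑ i, ∑ j ∈ R i, price σ π i j * (b j - ahat R a j) = 0 := by
    rw [hswap (fun i j => price σ π i j * (b j - ahat R a j))]
    refine Finset.sum_eq_zero fun j _ => ?_
    rw [← Finset.sum_mul, hpricesum, zero_mul]
  rw [hz, zero_add] at hsum
  exact hsum
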